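/- For the system of coalescing random walks dual to the discrete-time voter model on a finite connected graph G, the geometric decay rate of the full coalescence time σ equals the maximum over pairs of distinct vertices of the decay rates of the pairwise meeting times: λ_CRW(G) = lim_{n→∞} (max_{v≠v'} P(σ_{v,v'} > n))^{1/n}, where σ_{v,v'} is the first meeting time of the walkers started at v and v'. -/

import Mathlib

open Filter Topology Matrix

variable {V : Type*} [Fintype V] [DecidableEq V]

/-- Transition matrix of the system of coalescing lazy random walks on `G`: a state is
a map `f : V → V` recording the position of the walker started at each vertex; a uniform
vertex `v` and uniform neighbor `u` are chosen and all walkers at `v` move to `u`. -/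
noncomputable def crwMatrix (G : SimpleGraph V) [DecidableRel G.Adj] :
    Matrix (V → V) (V → V) ℝ := fun f g =>
  (1 / (Fintype.card V : ℝ)) * ∑ v : V, ∑ u ∈ G.neighborFinset v,
    (1 / (G.degree v : ℝ)) *
      (if g = (fun w => if f w = v then u else f w) then 1 else 0)

/-- `P(σ > n)`: probability that the coalescing random walks started from one walker at
each vertex have not fully coalesced by time `n`. -/
noncomputable def crwSurvival (G : SimpleGraph V) [DecidableRel G.Adj] (n : ℕ) : ℝ :=
  ∑ g : V → V, if ∀ v w : V, g v = g w then 0 else ((crwMatrix G) ^ n) id g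

/-- `P(σ_{v,v'} > n)`: probability that the walkers started at `v` and `v'` have not
met by time `n`. -/
noncomputable def crwPairSurvival (G : SimpleGraph V) [DecidableRel G.Adj]
    (v v' : V) (n : ℕ) : ℝ :=
  ∑ g : V → V, if g v = g v' then 0 else ((crwMatrix G) ^ n) id g

lemma crwMatrix_nonneg (G : SimpleGraph V) [DecidableRel G.Adj] (f g : V → V) :
    0 ≤ crwMatrix G f g := by
  unfold crwMatrix
  apply mul_nonneg (by positivity)
  apply Finset.sum_nonneg; intro v _
  apply Finset.sum_nonneg; intro u _
  apply mul_nonneg (by positivity)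
  split <;> norm_num

lemma crwMatrix_pow_nonneg (G : SimpleGraph V) [DecidableRel G.Adj] (n : ℕ) :
    ∀ f g : V → V, 0 ≤ ((crwMatrix G) ^ n) f g := by
  induction n with
  | zero =>
      intro f g
      simp only [pow_zero, Matrix.one_apply]
      split <;> norm_num
  | succ n ih =>
      intro f g
      rw [pow_succ, Matrix.mul_apply]
      exact Finset.sum_nonneg fun h _ => mul_nonneg (ih f h) (crwMatrix_nonneg G h g)

lemma crwPairSurvival_nonneg (G : SimpleGraph V) [DecidableRel G.Adj]
    (v v' : V) (n : ℕ) : 0 ≤ crwPairSurvival G v v' n := by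
  apply Finset.sum_nonneg; intro g _
  split
  · exact le_refl 0
  · exact crwMatrix_pow_nonneg G n id g

lemma crwPairSurvival_le_crwSurvival (G : SimpleGraph V) [DecidableRel G.Adj]
    (v v' : V) (n : ℕ) : crwPairSurvival G v v' n ≤ crwSurvival G n := by
  apply Finset.sum_le_sum; intro g _
  by_cases h : g v = g v'
  · rw [if_pos h]
    split
    · exact le_refl 0
    · exact crwMatrix_pow_nonneg G n id g
  · rw [if_neg h, if_neg (fun hall => h (hall v v'))]

lemma crwSurvival_le_sum_pairs (G : SimpleGraph V) [DecidableRel G.Adj] (n : ℕ) :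
    crwSurvival G n ≤
      ∑ p : {p : V × V // p.1 ≠ p.2}, crwPairSurvival G p.1.1 p.1.2 n := by
  unfold crwSurvival crwPairSurvival
  rw [Finset.sum_comm]
  apply Finset.sum_le_sum; intro g _
  by_cases h : ∀ v w : V, g v = g w
  · rw [if_pos h]
    apply Finset.sum_nonneg; intro p _
    split
    · exact le_refl 0
    · exact crwMatrix_pow_nonneg G n id g
  · rw [if_neg h]
    push_neg at h
    obtain ⟨v, w, hvw⟩ := h
    have key := Finset.single_le_sum
      (f := fun p : {p : V × V // p.1 ≠ p.2} =>
        if g p.1.1 = g p.1.2 then 0 else ((crwMatrix G) ^ n) id g)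
      (fun p _ => by
        split
        · exact le_refl 0
        · exact crwMatrix_pow_nonneg G n id g)
      (Finset.mem_univ (⟨(v, w), fun hc => hvw (congrArg g hc)⟩ : {p : V × V // p.1 ≠ p.2}))
    simpa [if_neg hvw] using key

/-- The geometric decay rate of the full coalescence time `σ` equals the maximal decay
rate of the pairwise meeting times:
`λ_CRW(G) = lim_n (max_{v ≠ v'} P(σ_{v,v'} > n))^{1/n}`. -/
theorem crw_rate_eq_max_pairwise_rate (G : SimpleGraph V) [DecidableRel G.Adj]
    (hG : G.Connected) (hcard : 2 ≤ Fintype.card V) (lamCRW : ℝ)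
    (hC : Tendsto (fun n : ℕ => crwSurvival G n ^ ((1 : ℝ) / n)) atTop (𝓝 lamCRW)) :
    Tendsto (fun n : ℕ =>
        (⨆ p : {p : V × V // p.1 ≠ p.2}, crwPairSurvival G p.1.1 p.1.2 n) ^ ((1 : ℝ) / n))
      atTop (𝓝 lamCRW) := by
  obtain ⟨a, b, hab⟩ := Fintype.exists_pair_of_one_lt_card (α := V) (by omega)
  haveI : Nonempty {p : V × V // p.1 ≠ p.2} := ⟨⟨(a, b), hab⟩⟩
  set N : ℝ := (Fintype.card {p : V × V // p.1 ≠ p.2} : ℝ) with hNdef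
  have hNpos : 0 < N := by
    have h := Fintype.card_pos (α := {p : V × V // p.1 ≠ p.2})
    rw [hNdef]
    exact_mod_cast h
  set S : ℕ → ℝ := fun n => ⨆ p : {p : V × V // p.1 ≠ p.2}, crwPairSurvival G p.1.1 p.1.2 n
    with hSdef
  have hSnonneg : ∀ n, 0 ≤ S n := by
    intro n
    refine le_trans (crwPairSurvival_nonneg G a b n) ?_
    simp only [hSdef]
    exact le_ciSup (f := fun p : {p : V × V // p.1 ≠ p.2} =>
        crwPairSurvival G p.1.1 p.1.2 n)
      (Set.Finite.bddAbove (Set.finite_range _)) ⟨(a, b), hab⟩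
  have hSL : ∀ n, S n ≤ crwSurvival G n := by
    intro n
    simp only [hSdef]
    exact ciSup_le fun p => crwPairSurvival_le_crwSurvival G p.1.1 p.1.2 n
  have hLNS : ∀ n, crwSurvival G n ≤ N * S n := by
    intro n
    refine le_trans (crwSurvival_le_sum_pairs G n) ?_
    have h1 : ∑ p : {p : V × V // p.1 ≠ p.2}, crwPairSurvival G p.1.1 p.1.2 n ≤
        Fintype.card {p : V × V // p.1 ≠ p.2} • S n := by
      apply Finset.sum_le_card_nsmul
      intro p _
      simp only [hSdef]
      exact le_ciSup (f := fun p : {p : V × V // p.1 ≠ p.2} =>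
          crwPairSurvival G p.1.1 p.1.2 n)
        (Set.Finite.bddAbove (Set.finite_range _)) p
    rw [nsmul_eq_mul] at h1
    rw [hNdef]
    exact h1
  -- Convergence of N ^ (1/n) to 1
  have hN1 : Tendsto (fun n : ℕ => N ^ ((1 : ℝ) / n)) atTop (𝓝 1) := by
    have h0 : Tendsto (fun n : ℕ => (1 : ℝ) / n) atTop (𝓝 0) :=
      tendsto_one_div_atTop_nhds_zero_nat
    have hcont : ContinuousAt (fun x : ℝ => N ^ x) 0 :=
      Real.continuousAt_const_rpow (ne_of_gt hNpos)
    have := hcont.tendsto.comp h0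
    simpa [Function.comp_def, Real.rpow_zero] using this
  have hlow : Tendsto
      (fun n : ℕ => crwSurvival G n ^ ((1 : ℝ) / n) / N ^ ((1 : ℝ) / n))
      atTop (𝓝 lamCRW) := by
    have := hC.div hN1 one_ne_zero
    simpa only [div_one, Pi.div_def] using this
  refine tendsto_of_tendsto_of_tendsto_of_le_of_le hlow hC ?_ ?_
  · intro n
    have hNr : 0 < N ^ ((1 : ℝ) / n) := Real.rpow_pos_of_pos hNpos _
    rw [div_le_iff₀ hNr]
    have h1 : crwSurvival G n ^ ((1 : ℝ) / n) ≤ (N * S n) ^ ((1 : ℝ) / n) :=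
      Real.rpow_le_rpow (le_trans (hSnonneg n) (hSL n)) (hLNS n) (by positivity)
    have h2 : (N * S n) ^ ((1 : ℝ) / n) = N ^ ((1 : ℝ) / n) * S n ^ ((1 : ℝ) / n) :=
      Real.mul_rpow (le_of_lt hNpos) (hSnonneg n)
    rw [h2] at h1
    linarith
  · intro n
    exact Real.rpow_le_rpow (hSnonneg n) (hSL n) (by positivity)
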